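/- For every permutation σ of Fin m and every λ : Fin m → ℤ, the trace of the matrix product P_σ · E_1(λ) · E_2(λ) ⋯ E_m(λ) over the free algebra A equals Σ_{i : Fin m → Fin n} e(i(1), i(σ⁻¹(1)), λ(1)) · e(i(2), i(σ⁻¹(2)), λ(2)) ⋯ e(i(m), i(σ⁻¹(m)), λ(m)), where the product on the right is taken in increasing order of the slot index k = 1, …, m. (This is the paper's basis-free realization, in the general linear case, of Molev's full partial trace tr_{1,…,m} P_σ E[−λ_1]_{1,m} ⋯ E[−λ_m]_{m,m} inside the tensor algebra T(gl_n[t⁻¹]t⁻¹).) -/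

import Mathlib

/-- The generator `e(i,j,r)`, modeling `E_{ij} t^{-r}` inside the tensor algebra
`T(gl_n[t⁻¹]t⁻¹)`. -/
noncomputable def glGen (n : ℕ) (i j : Fin n) (r : ℤ) :
    FreeAlgebra ℂ (Fin n × Fin n × ℤ) :=
  FreeAlgebra.ι ℂ (i, j, r)

/-- The permutation matrix `P_σ` acting on `(ℂⁿ)^{⊗m}`. -/
noncomputable def permMat (n m : ℕ) (σ : Equiv.Perm (Fin m)) :
    Matrix (Fin m → Fin n) (Fin m → Fin n) (FreeAlgebra ℂ (Fin n × Fin n × ℤ)) :=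
  Matrix.of fun f g => if g = fun j => f (σ j) then 1 else 0

/-- The matrix `E[-λ_k]_{k,m}` acting in the `k`-th tensor slot. -/
noncomputable def Emat (n m : ℕ) (lam : Fin m → ℤ) (k : Fin m) :
    Matrix (Fin m → Fin n) (Fin m → Fin n) (FreeAlgebra ℂ (Fin n × Fin n × ℤ)) :=
  Matrix.of fun f g =>
    if ∀ j : Fin m, j ≠ k → f j = g j then glGen n (f k) (g k) (lam k) else 0

theorem Emat_list_prod (n m : ℕ) (lam : Fin m → ℤ) :
    ∀ (L : List (Fin m)), L.Nodup → ∀ f g : Fin m → Fin n,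
      ((L.map (Emat n m lam)).prod) f g =
        if (∀ j, j ∉ L → f j = g j) then
          (L.map (fun k => glGen n (f k) (g k) (lam k))).prod else 0 := by
  intro L
  induction L with
  | nil =>
    intro _ f g
    simp [Matrix.one_apply, funext_iff, eq_comm]
  | cons k L ih =>
    intro hnd f g
    obtain ⟨hk, hnd'⟩ := List.nodup_cons.mp hnd
    rw [List.map_cons, List.prod_cons, Matrix.mul_apply]
    rw [Finset.sum_eq_single (Function.update f k (g k))]
    · have h1 : Emat n m lam k f (Function.update f k (g k)) =
          glGen n (f k) (g k) (lam k) := by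
        rw [Emat, Matrix.of_apply, if_pos (fun j hj => (Function.update_of_ne hj _ _).symm),
          Function.update_self]
      rw [h1, ih hnd', mul_ite, mul_zero]
      have hc : (∀ j, j ∉ L → Function.update f k (g k) j = g j) ↔
          (∀ j, j ∉ k :: L → f j = g j) := by
        constructor
        · intro h j hj
          have hjk : j ≠ k := fun e => hj (by simp [e])
          have := h j (fun e => hj (List.mem_cons_of_mem _ e))
          rwa [Function.update_of_ne hjk] at this
        · intro h j hj
          by_cases hjk : j = k
          · subst hjk; simp
          · rw [Function.update_of_ne hjk]
            exact h j (by simp [hjk, hj])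
      have hp : (L.map (fun j => glGen n (Function.update f k (g k) j) (g j) (lam j))) =
          (L.map (fun j => glGen n (f j) (g j) (lam j))) := by
        apply List.map_congr_left
        intro j hj
        have : j ≠ k := fun e => hk (e ▸ hj)
        rw [Function.update_of_ne this]
      simp only [hc, hp, List.map_cons, List.prod_cons]
    · intro h _ hne
      by_cases hfh : ∀ j, j ≠ k → f j = h j
      · have hhk : h k ≠ g k := by
          intro e
          apply hne
          funext j
          by_cases hjk : j = k
          · subst hjk; simp [e]
          · rw [Function.update_of_ne hjk, hfh j hjk]
        rw [ih hnd']
        have : ¬ (∀ j, j ∉ L → h j = g j) := fun H => hhk (H k hk)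
        rw [if_neg this, mul_zero]
      · have : Emat n m lam k f h = 0 := by simp [Emat, hfh]
        rw [this, zero_mul]
    · intro h; exact absurd (Finset.mem_univ _) h

/-- Basis-free realization of Molev's full partial trace
`tr_{1,…,m} P_σ E[-λ_1]_{1,m} ⋯ E[-λ_m]_{m,m}` in Type A. -/
theorem trace_permMat_mul_EmatProd (n m : ℕ) (hn : 1 ≤ n) (hm : 1 ≤ m)
    (σ : Equiv.Perm (Fin m)) (lam : Fin m → ℤ) :
    Matrix.trace (permMat n m σ * (List.ofFn fun k => Emat n m lam k).prod) =
      ∑ i : Fin m → Fin n,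
        (List.ofFn fun k => glGen n (i k) (i (σ⁻¹ k)) (lam k)).prod := by
  have hM : ∀ f g : Fin m → Fin n,
      ((List.ofFn fun k => Emat n m lam k).prod) f g =
        (List.ofFn fun k => glGen n (f k) (g k) (lam k)).prod := by
    intro f g
    rw [List.ofFn_eq_map, List.ofFn_eq_map,
      Emat_list_prod n m lam _ (List.nodup_finRange m) f g,
      if_pos (fun j hj => absurd (List.mem_finRange j) hj)]
  rw [Matrix.trace]
  rw [Fintype.sum_equiv (Equiv.arrowCongr (σ⁻¹ : Equiv.Perm (Fin m)) (Equiv.refl (Fin n)))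
    _ (fun i => (List.ofFn fun k => glGen n (i k) (i (σ⁻¹ k)) (lam k)).prod)]
  intro f
  rw [Matrix.diag_apply, Matrix.mul_apply]
  have : ∀ g, permMat n m σ f g * ((List.ofFn fun k => Emat n m lam k).prod) g f =
      if g = (fun j => f (σ j)) then
        ((List.ofFn fun k => Emat n m lam k).prod) (fun j => f (σ j)) f else 0 := by
    intro g
    by_cases hg : g = fun j => f (σ j)
    · subst hg; simp [permMat]
    · simp [permMat, hg]
  rw [Finset.sum_congr rfl (fun g _ => this g), Finset.sum_ite_eq' Finset.univ _ _,
    if_pos (Finset.mem_univ _), hM]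
  refine congrArg List.prod (congrArg List.ofFn ?_)
  funext k
  simp [Equiv.arrowCongr, Equiv.apply_symm_apply, Equiv.Perm.inv_def]
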